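/- Let k be a field of characteristic p > 0 and let q be a prime different from p. Then f(Z,T) = Z^{p²} + T + T^{qp} is a line in k[Z,T], i.e., the quotient ring k[Z,T]/(f) is isomorphic as a k-algebra to a polynomial ring in one variable over k. -/

import Mathlib

section NagataAux

/-- Properties of the sign constant `c = (-1)^(q+1)` in characteristic `p`. -/
lemma nagata_sign_exists (k : Type*) [Field k] (p q : ℕ) [Fact p.Prime] (hchar : CharP k p) :
    ∃ c : k, c ^ p = c ∧ c ^ (p ^ 2) = c ∧ ((-1 : k)) ^ q = -c ∧
      ((-1 : k)) ^ (q * p) = -c ∧ c * ((-1 : k)) ^ q = -1 := by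
  have hneg : ((-1 : k)) ^ p = -1 := neg_one_pow_char k p
  refine ⟨(-1) ^ (q + 1), ?_, ?_, ?_, ?_, ?_⟩
  · rw [← pow_mul, mul_comm, pow_mul, hneg]
  · rw [← pow_mul, mul_comm, pow_mul, neg_one_pow_char_pow]
  · rw [pow_succ]; ring
  · rw [mul_comm, pow_mul, hneg, pow_succ]; ring
  · have h2 : ((-1 : k)) ^ q * ((-1 : k)) ^ q = 1 := by
      rw [← pow_add]; exact Even.neg_one_pow ⟨q, rfl⟩
    rw [pow_succ]
    linear_combination (-1 : k) * h2

/-- The key computation modulo the Nagata relation, in an abstract ring of char `p`. -/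
lemma nagata_key {A : Type*} [CommRing A] (p q : ℕ) [Fact p.Prime] [CharP A p]
    (c z t : A) (hcp : c ^ p = c) (hq1 : ((-1 : A)) ^ q = -c) (hcq : c * ((-1 : A)) ^ q = -1)
    (rel : z ^ p ^ 2 + t + t ^ (q * p) = 0) :
    -((z - c * (z ^ p + t ^ q) ^ q) ^ p ^ 2) = t ∧
      (z - c * (z ^ p + t ^ q) ^ q) + c * (z - c * (z ^ p + t ^ q) ^ q) ^ (q * p) = z := by
  have hz2 : z ^ p ^ 2 = -t - t ^ (q * p) := by linear_combination rel
  set r : A := z ^ p + t ^ q with hrdef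
  set w : A := z - c * r ^ q with hwdef
  have hnegA : ((-1 : A)) ^ p = -1 := neg_one_pow_char A p
  have hrp : r ^ p = -t := by
    rw [hrdef, add_pow_char, ← pow_mul, ← pow_mul, ← pow_two, hz2]
    ring
  have hwp : w ^ p = r := by
    have h1 : w ^ p = z ^ p - (c * r ^ q) ^ p := by
      rw [hwdef, sub_eq_add_neg, add_pow_char, neg_pow, hnegA]; ring
    have h2 : (r ^ q) ^ p = (r ^ p) ^ q := by rw [← pow_mul, ← pow_mul, mul_comm]
    rw [h1, mul_pow, hcp, h2, hrp, neg_pow, hrdef]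
    linear_combination (-(t ^ q)) * hcq
  constructor
  · have hpp : p ^ 2 = p * p := by ring
    rw [hpp, pow_mul, hwp, hrp, neg_neg]
  · have h : w ^ (q * p) = r ^ q := by rw [mul_comm, pow_mul, hwp]
    rw [h, hwdef]; ring

/-- The parametrizing polynomials kill the Nagata polynomial. -/
lemma nagata_param {k : Type*} [Field k] (p q : ℕ) [Fact p.Prime] (hchar : CharP k p)
    (c : k) (hcp : c ^ p = c) (hcp2 : c ^ (p ^ 2) = c)
    (hq1 : ((-1 : k)) ^ q = -c) (hqp' : ((-1 : k)) ^ (q * p) = -c) :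
    ((Polynomial.X + Polynomial.C c * Polynomial.X ^ (q * p) : Polynomial k)) ^ (p ^ 2)
        + (-(Polynomial.X ^ (p ^ 2))) + (-(Polynomial.X ^ (p ^ 2) : Polynomial k)) ^ (q * p) = 0 ∧
      ((Polynomial.X + Polynomial.C c * Polynomial.X ^ (q * p) : Polynomial k)) ^ p
        + (-(Polynomial.X ^ (p ^ 2) : Polynomial k)) ^ q = Polynomial.X ^ p := by
  haveI : CharP (Polynomial k) p := Polynomial.instCharP p
  have hCc2 : (Polynomial.C c : Polynomial k) ^ (p ^ 2) = Polynomial.C c := by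
    rw [← map_pow, hcp2]
  have hCc1 : (Polynomial.C c : Polynomial k) ^ p = Polynomial.C c := by
    rw [← map_pow, hcp]
  constructor
  · rw [add_pow_char_pow, mul_pow, hCc2, neg_pow]
    have h2 : ((-1 : Polynomial k)) ^ (q * p) = -(Polynomial.C c) := by
      have h3 : ((-1 : Polynomial k)) ^ (q * p)
          = Polynomial.C ((-1 : k) ^ (q * p)) := by rw [map_pow, map_neg, map_one]
      rw [h3, hqp', map_neg]
    rw [h2]; ring
  · rw [add_pow_char, mul_pow, hCc1, neg_pow]
    have h2 : ((-1 : Polynomial k)) ^ q = -(Polynomial.C c) := by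
      have h3 : ((-1 : Polynomial k)) ^ q
          = Polynomial.C ((-1 : k) ^ q) := by rw [map_pow, map_neg, map_one]
      rw [h3, hq1, map_neg]
    rw [h2]; ring

end NagataAux

set_option maxHeartbeats 1000000 in
open MvPolynomial in
/-- The Nagata polynomial `Z^{p²} + T + T^{qp}` is a line in `k[Z,T]` in
characteristic `p > 0`, for `q` a prime different from `p`. -/
theorem nagata_line_is_line
    {k : Type*} [Field k] (p q : ℕ) [hp : Fact p.Prime] (hchar : CharP k p)
    (hq : q.Prime) (hqp : q ≠ p) :
    Nonempty ((MvPolynomial (Fin 2) k ⧸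
        Ideal.span {(X 0 : MvPolynomial (Fin 2) k) ^ (p ^ 2) + X 1 + X 1 ^ (q * p)})
      ≃ₐ[k] Polynomial k) := by
  classical
  obtain ⟨c, hcp, hcp2, hq1, hqp', hcq⟩ := nagata_sign_exists k p q hchar
  obtain ⟨hker0, hpsip0⟩ := nagata_param p q hchar c hcp hcp2 hq1 hqp'
  set f : MvPolynomial (Fin 2) k := X 0 ^ (p ^ 2) + X 1 + X 1 ^ (q * p) with hf
  set I : Ideal (MvPolynomial (Fin 2) k) := Ideal.span {f} with hIdef
  -- the quotient ring is nontrivial and has characteristic p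
  have hfunit : ¬ IsUnit f := by
    intro h
    have h0 : IsUnit (aeval (fun _ : Fin 2 => (0 : k)) f) := h.map _
    have hp0 : p ^ 2 ≠ 0 := pow_ne_zero _ hp.out.ne_zero
    have hq0 : q * p ≠ 0 := mul_ne_zero hq.ne_zero hp.out.ne_zero
    simp [hf, zero_pow hp0, zero_pow hq0] at h0
  have hItop : I ≠ ⊤ := fun h => hfunit (by rwa [hIdef, Ideal.span_singleton_eq_top] at h)
  haveI : Nontrivial (MvPolynomial (Fin 2) k ⧸ I) := Ideal.Quotient.nontrivial_iff.mpr hItop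
  haveI : CharP (MvPolynomial (Fin 2) k ⧸ I) p :=
    charP_of_injective_algebraMap (algebraMap k (MvPolynomial (Fin 2) k ⧸ I)).injective p
  set mk : MvPolynomial (Fin 2) k →ₐ[k] MvPolynomial (Fin 2) k ⧸ I :=
    Ideal.Quotient.mkₐ k I with hmk
  have rel : (mk (X 0)) ^ p ^ 2 + mk (X 1) + (mk (X 1)) ^ (q * p) = 0 := by
    have hfI : f ∈ I := hIdef ▸ Ideal.subset_span (Set.mem_singleton f)
    have h1 : mk f = 0 := Ideal.Quotient.eq_zero_iff_mem.mpr hfI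
    rw [hf] at h1
    simpa [map_add, map_pow] using h1
  obtain ⟨key1, key2⟩ := nagata_key p q (algebraMap k _ c) (mk (X 0)) (mk (X 1))
    (by rw [← map_pow, hcp])
    (by
      have h : ((-1 : MvPolynomial (Fin 2) k ⧸ I)) ^ q
          = algebraMap k _ (((-1 : k)) ^ q) := by rw [map_pow, map_neg, map_one]
      rw [h, hq1, map_neg])
    (by
      have h : ((-1 : MvPolynomial (Fin 2) k ⧸ I)) ^ q
          = algebraMap k _ (((-1 : k)) ^ q) := by rw [map_pow, map_neg, map_one]
      rw [h, ← map_mul, hcq, map_neg, map_one]) rel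
  -- the forward and backward maps
  set ψ : Polynomial k := Polynomial.X + Polynomial.C c * Polynomial.X ^ (q * p) with hψ
  set φ : Polynomial k := -(Polynomial.X ^ (p ^ 2)) with hφ
  set Φ' : MvPolynomial (Fin 2) k →ₐ[k] Polynomial k := aeval ![ψ, φ] with hΦ'
  have hΦz : Φ' (X 0) = ψ := by simp [hΦ']
  have hΦt : Φ' (X 1) = φ := by simp [hΦ']
  have hker : Φ' f = 0 := by
    rw [hf]
    simp only [map_add, map_pow, hΦz, hΦt]
    rw [hψ, hφ] at hker0 ⊢
    exact hker0
  set Φ : (MvPolynomial (Fin 2) k ⧸ I) →ₐ[k] Polynomial k :=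
    Ideal.Quotient.liftₐ I Φ' (by
      intro a ha
      rw [hIdef, Ideal.mem_span_singleton] at ha
      obtain ⟨g, rfl⟩ := ha
      rw [map_mul, hker, zero_mul]) with hΦdef
  have hΦmk : ∀ g, Φ (mk g) = Φ' g := by
    intro g
    rw [hΦdef, hmk]
    simp [Ideal.Quotient.liftₐ_apply, Ideal.Quotient.mkₐ_eq_mk]
    exact Ideal.Quotient.lift_mk _ _ _
  set w : MvPolynomial (Fin 2) k ⧸ I :=
    mk (X 0) - algebraMap k _ c * ((mk (X 0)) ^ p + (mk (X 1)) ^ q) ^ q with hwdef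
  set Ψ : Polynomial k →ₐ[k] (MvPolynomial (Fin 2) k ⧸ I) := Polynomial.aeval w with hΨdef
  have hw_mk : w = mk (X 0 - MvPolynomial.C c * ((X 0) ^ p + (X 1) ^ q) ^ q) := by
    rw [map_sub, map_mul, map_pow, map_add, map_pow, map_pow, hwdef]
    have hCk : mk (MvPolynomial.C c) = algebraMap k _ c := by
      rw [← MvPolynomial.algebraMap_eq, AlgHom.commutes]
    rw [hCk]
  have hΦw : Φ w = Polynomial.X := by
    rw [hw_mk, hΦmk]
    simp only [map_sub, map_mul, map_pow, map_add, hΦz, hΦt]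
    have hCc : Φ' (MvPolynomial.C c) = Polynomial.C c := by
      rw [← MvPolynomial.algebraMap_eq, AlgHom.commutes, Polynomial.algebraMap_eq]
    rw [hCc, hpsip0, hψ, ← pow_mul, mul_comm p q]
    ring
  refine ⟨AlgEquiv.ofAlgHom Φ Ψ ?_ ?_⟩
  · apply Polynomial.algHom_ext
    rw [AlgHom.comp_apply, hΨdef, Polynomial.aeval_X, hΦw, AlgHom.id_apply]
  · apply Ideal.Quotient.algHom_ext
    apply MvPolynomial.algHom_ext
    intro i
    fin_cases i
    · show Ψ (Φ (mk (X 0))) = mk (X 0)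
      rw [hΦmk, hΦz, hψ, map_add, map_mul, map_pow, hΨdef, Polynomial.aeval_X,
        Polynomial.aeval_C]
      exact key2
    · show Ψ (Φ (mk (X 1))) = mk (X 1)
      rw [hΦmk, hΦt, hφ, map_neg, map_pow, hΨdef, Polynomial.aeval_X]
      exact key1
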